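/- Let A ~ Bin(n, α) with CDF F_A and B ~ Bin(n, α') with CDF F_B, where α' > α. Then the random variable p = e·F_A(B) satisfies P(p ≤ c) ≤ c for all c ∈ [0,1]; in particular p is a valid p-value (super-uniform) under the hypothesis α' > α. -/

import Mathlib

open MeasureTheory

/-- CDF of a Binomial(n, p) random variable evaluated at `s`. -/
noncomputable def binCDF (n : ℕ) (p : ℝ) (s : ℕ) : ℝ :=
  ∑ j ∈ Finset.range (s + 1), (n.choose j : ℝ) * p ^ j * (1 - p) ^ (n - j)

lemma binCDF_nonneg (n : ℕ) {p : ℝ} (h0 : 0 ≤ p) (h1 : p ≤ 1) (s : ℕ) :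
    0 ≤ binCDF n p s := by
  refine Finset.sum_nonneg fun j _ => ?_
  have : (0:ℝ) ≤ 1 - p := by linarith
  positivity

lemma binCDF_mono_s (n : ℕ) {p : ℝ} (h0 : 0 ≤ p) (h1 : p ≤ 1) {s t : ℕ} (hst : s ≤ t) :
    binCDF n p s ≤ binCDF n p t := by
  refine Finset.sum_le_sum_of_subset_of_nonneg (Finset.range_subset_range.2 (by omega)) ?_
  intro j _ _
  have : (0:ℝ) ≤ 1 - p := by linarith
  positivity

lemma binCDF_eq_one (n : ℕ) {p : ℝ} {s : ℕ} (hs : n ≤ s) : binCDF n p s = 1 := by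
  have h1 : binCDF n p n = binCDF n p s := by
    unfold binCDF
    refine Finset.sum_subset (Finset.range_subset_range.2 (by omega)) ?_
    intro j hj hj'
    simp only [Finset.mem_range] at hj hj'
    have : n < j := by omega
    simp [Nat.choose_eq_zero_of_lt this]
  rw [← h1]
  have h2 := add_pow p (1 - p) n
  simp only [add_sub_cancel, one_pow] at h2
  unfold binCDF
  conv_rhs => rw [h2]
  exact Finset.sum_congr rfl fun j _ => by ring

lemma choose_coeff_eq (n j : ℕ) :
    ((j + 1 : ℕ) : ℝ) * (n.choose (j + 1) : ℝ) = ((n - j : ℕ) : ℝ) * (n.choose j : ℝ) := by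
  rw [← Nat.cast_mul, ← Nat.cast_mul, mul_comm ((j:ℕ)+1), Nat.choose_succ_right_eq,
    mul_comm]

lemma hasDerivAt_binCDF (n s : ℕ) (p : ℝ) :
    HasDerivAt (fun q => binCDF n q s)
      (-(((n - s : ℕ) : ℝ) * (n.choose s : ℝ) * p ^ s * (1 - p) ^ (n - s - 1))) p := by
  set D : ℕ → ℝ := fun j => (j : ℝ) * (n.choose j : ℝ) * p ^ (j - 1) * (1 - p) ^ (n - j) with hD
  have key : ∀ j, HasDerivAt (fun q : ℝ => (n.choose j : ℝ) * q ^ j * (1 - q) ^ (n - j))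
      (D j - D (j + 1)) p := by
    intro j
    have h1 : HasDerivAt (fun q : ℝ => q ^ j) ((j : ℝ) * p ^ (j - 1)) p := hasDerivAt_pow j p
    have h2 : HasDerivAt (fun q : ℝ => (1 - q) ^ (n - j))
        (((n - j : ℕ) : ℝ) * (1 - p) ^ (n - j - 1) * (-1)) p := by
      have hin : HasDerivAt (fun q : ℝ => 1 - q) (-1) p := by
        simpa using (hasDerivAt_id p).const_sub 1
      exact (hasDerivAt_pow (n - j) (1 - p)).comp p hin
    have h3 : HasDerivAt (fun q : ℝ => (n.choose j : ℝ) * (q ^ j * (1 - q) ^ (n - j))) _ p :=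
      ((h1.fun_mul h2).const_mul ((n.choose j : ℝ)))
    convert h3 using 1
    · ext q; ring
    show (↑j * ↑(n.choose j) * p ^ (j - 1) * (1 - p) ^ (n - j)) -
        (↑(j + 1) * ↑(n.choose (j + 1)) * p ^ (j + 1 - 1) * (1 - p) ^ (n - (j + 1))) = _
    rw [Nat.add_sub_cancel, show n - (j + 1) = n - j - 1 from by omega]
    have hco := choose_coeff_eq n j
    push_cast at hco ⊢
    linear_combination (-(p ^ j * (1 - p) ^ (n - j - 1))) * hco
  have hsum : HasDerivAt (fun q => binCDF n q s)
      (∑ j ∈ Finset.range (s + 1), (D j - D (j + 1))) p := by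
    unfold binCDF
    exact HasDerivAt.fun_sum fun j _ => key j
  have htel : ∑ j ∈ Finset.range (s + 1), (D j - D (j + 1)) = D 0 - D (s + 1) :=
    Finset.sum_range_sub' D (s + 1)
  rw [htel] at hsum
  have hD0 : D 0 = 0 := by simp [hD]
  have hDs : D (s + 1) = ((n - s : ℕ) : ℝ) * (n.choose s : ℝ) * p ^ s * (1 - p) ^ (n - s - 1) := by
    show (↑(s + 1) * ↑(n.choose (s + 1)) * p ^ (s + 1 - 1) * (1 - p) ^ (n - (s + 1))) = _
    rw [Nat.add_sub_cancel, show n - (s + 1) = n - s - 1 from by omega]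
    have hco := choose_coeff_eq n s
    push_cast at hco ⊢
    linear_combination (p ^ s * (1 - p) ^ (n - s - 1)) * hco
  rw [hD0, hDs, zero_sub] at hsum
  exact hsum

lemma binCDF_anti (n s : ℕ) {a b : ℝ} (ha : 0 ≤ a) (hab : a ≤ b) (hb : b ≤ 1) :
    binCDF n b s ≤ binCDF n a s := by
  have hdiff : Differentiable ℝ (fun q => binCDF n q s) :=
    fun x => (hasDerivAt_binCDF n s x).differentiableAt
  have hanti : AntitoneOn (fun q => binCDF n q s) (Set.Icc (0:ℝ) 1) := by
    apply antitoneOn_of_deriv_nonpos (convex_Icc 0 1) hdiff.continuous.continuousOn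
      (hdiff.differentiableOn)
    intro x hx
    rw [interior_Icc, Set.mem_Ioo] at hx
    rw [(hasDerivAt_binCDF n s x).deriv]
    have h1 : (0:ℝ) ≤ 1 - x := by linarith
    have h2 : (0:ℝ) ≤ x := le_of_lt hx.1
    have : (0:ℝ) ≤ ((n - s : ℕ) : ℝ) * (n.choose s : ℝ) * x ^ s * (1 - x) ^ (n - s - 1) := by
      positivity
    linarith
  exact hanti ⟨ha, le_trans hab hb⟩ ⟨le_trans ha hab, hb⟩ hab

/-- Let `A ~ Bin(n,α)` with CDF `F_A` and `B ~ Bin(n,α')` with `α' > α`. Then the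
random variable `p = e·F_A(B)` is super-uniform: `P(p ≤ c) ≤ c` for all `c ∈ [0,1]`. -/
theorem binomial_trial_p_value_valid
    {Ω : Type*} [MeasurableSpace Ω] (μ : Measure Ω) [IsProbabilityMeasure μ]
    (n : ℕ) (α α' : ℝ) (hα : 0 ≤ α) (hαα' : α < α') (hα' : α' ≤ 1)
    (B : Ω → ℕ) (hB : Measurable B)
    (hBdist : ∀ s : ℕ, μ {ω | B ω ≤ s} = ENNReal.ofReal (binCDF n α' s)) :
    ∀ c ∈ Set.Icc (0 : ℝ) 1,
      μ {ω | Real.exp 1 * binCDF n α (B ω) ≤ c} ≤ ENNReal.ofReal c := by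
  intro c hc
  obtain ⟨hc0, hc1⟩ := hc
  have hα1 : α ≤ 1 := le_of_lt (lt_of_lt_of_le hαα' hα')
  have he1 : (1:ℝ) < Real.exp 1 := by
    have := Real.add_one_le_exp (1:ℝ)
    linarith
  have hepos : (0:ℝ) < Real.exp 1 := by linarith
  classical
  set P : ℕ → Prop := fun s => Real.exp 1 * binCDF n α s ≤ c with hP
  by_cases hP0 : P 0
  · -- let s₀ be the greatest s ≤ n with P s
    set s₀ := Nat.findGreatest P n with hs₀
    have hPs₀ : P s₀ := Nat.findGreatest_spec (Nat.zero_le n) hP0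
    have hset : {ω | Real.exp 1 * binCDF n α (B ω) ≤ c} = {ω | B ω ≤ s₀} := by
      ext ω
      simp only [Set.mem_setOf_eq]
      constructor
      · intro h
        have hBn : B ω ≤ n := by
          by_contra hgt
          push_neg at hgt
          have : binCDF n α (B ω) = 1 := binCDF_eq_one n (by omega)
          rw [this, mul_one] at h
          linarith
        exact Nat.le_findGreatest hBn h
      · intro h
        have hmono : binCDF n α (B ω) ≤ binCDF n α s₀ := binCDF_mono_s n hα hα1 h
        have := mul_le_mul_of_nonneg_left hmono (le_of_lt hepos)
        exact le_trans this hPs₀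
    rw [hset, hBdist s₀]
    apply ENNReal.ofReal_le_ofReal
    have h1 : binCDF n α' s₀ ≤ binCDF n α s₀ := binCDF_anti n s₀ hα (le_of_lt hαα') hα'
    have h2 : binCDF n α s₀ ≤ Real.exp 1 * binCDF n α s₀ :=
      le_mul_of_one_le_left (binCDF_nonneg n hα hα1 s₀) (le_of_lt he1)
    exact le_trans h1 (le_trans h2 hPs₀)
  · have hset : {ω | Real.exp 1 * binCDF n α (B ω) ≤ c} = (∅ : Set Ω) := by
      ext ω
      simp only [Set.mem_setOf_eq, Set.mem_empty_iff_false, iff_false]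
      intro h
      apply hP0
      have hmono : binCDF n α 0 ≤ binCDF n α (B ω) := binCDF_mono_s n hα hα1 (Nat.zero_le _)
      have := mul_le_mul_of_nonneg_left hmono (le_of_lt hepos)
      exact le_trans this h
    rw [hset]
    simp
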